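/- Variance of the positive random feature kernel estimator is finite and given by Gaussian moments: for fixed x, x' ∈ ℝ^d and w ~ N(0, I_d), the second moment E[(exp(−‖x‖²/2 − ‖x'‖²/2) exp(wᵀ(x + x')))²] = exp(2‖x + x'‖² − ‖x‖² − ‖x'‖²), hence the single-sample estimator of exp(xᵀx') has variance exp(2‖x+x'‖² − ‖x‖² − ‖x'‖²) − exp(2 xᵀx'). -/

import Mathlib

open MeasureTheory ProbabilityTheory


open scoped NNReal ENNReal

lemma gauss_mgf (t : ℝ) :
    ∫ y, Real.exp (y * t) ∂(gaussianReal 0 1) = Real.exp (t ^ 2 / 2) := by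
  rw [gaussianReal_of_var_ne_zero 0 one_ne_zero]
  have hd : (volume.withDensity (gaussianPDF 0 1))
      = volume.withDensity (fun y => ((Real.toNNReal (gaussianPDFReal 0 1 y) : ℝ≥0) : ℝ≥0∞)) :=
    rfl
  rw [hd, integral_withDensity_eq_integral_smul
    ((measurable_gaussianPDFReal 0 1).real_toNNReal) _]
  have hpt : ∀ y : ℝ, (Real.toNNReal (gaussianPDFReal 0 1 y)) • Real.exp (y * t)
      = Real.exp (t ^ 2 / 2) * gaussianPDFReal t 1 y := by
    intro y
    rw [NNReal.smul_def, smul_eq_mul, Real.coe_toNNReal _ (gaussianPDFReal_nonneg 0 1 y)]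
    simp only [gaussianPDFReal, NNReal.coe_one, mul_one]
    rw [mul_comm, mul_left_comm, mul_left_comm (Real.exp (t ^ 2 / 2))]
    congr 1
    rw [← Real.exp_add, ← Real.exp_add]
    congr 1
    ring
  simp_rw [hpt]
  rw [integral_const_mul, integral_gaussianPDFReal_eq_one t one_ne_zero, mul_one]

lemma key (d : ℕ) (A : ℝ) (c : Fin d → ℝ) :
    ∫ w, Real.exp A * Real.exp (∑ i, w i * c i)
      ∂(Measure.pi fun _ : Fin d => gaussianReal 0 1)
      = Real.exp (A + ∑ i, c i ^ 2 / 2) := by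
  simp_rw [integral_const_mul]
  have h1 : ∀ w : Fin d → ℝ, Real.exp (∑ i, w i * c i) = ∏ i, Real.exp (w i * c i) :=
    fun w => Real.exp_sum _ _
  simp_rw [h1]
  have h2 : ∫ w, ∏ i, Real.exp (w i * c i)
      ∂(Measure.pi fun _ : Fin d => gaussianReal 0 1)
      = ∏ i, ∫ y, Real.exp (y * c i) ∂(gaussianReal 0 1) := by
    letI : MeasureSpace ℝ := ⟨gaussianReal 0 1⟩
    haveI : SigmaFinite (volume : Measure ℝ) := (inferInstance : SigmaFinite (gaussianReal 0 1))
    exact MeasureTheory.integral_fintype_prod_eq_prod (ι := Fin d)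
      (fun i y => Real.exp (y * c i)) (μ := fun _ => gaussianReal 0 1)
  rw [h2]
  have h3 : ∀ i, ∫ y, Real.exp (y * c i) ∂(gaussianReal 0 1) = Real.exp (c i ^ 2 / 2) :=
    fun i => gauss_mgf (c i)
  simp_rw [h3]
  rw [← Real.exp_sum, ← Real.exp_add]
/-- Second moment and variance of the single-sample positive random feature estimator
`Z = exp(−‖x‖²/2 − ‖x'‖²/2) exp(wᵀ(x+x'))` of `exp(xᵀx')`:
`E[Z²] = exp(2‖x+x'‖² − ‖x‖² − ‖x'‖²)` and
`Var[Z] = E[Z²] − (E[Z])² = exp(2‖x+x'‖² − ‖x‖² − ‖x'‖²) − exp(2 xᵀx')`. -/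
theorem prf_second_moment_and_variance (d : ℕ) (x x' : Fin d → ℝ) :
    (∫ w, (Real.exp (-(∑ i, x i ^ 2) / 2 - (∑ i, x' i ^ 2) / 2) *
            Real.exp (∑ i, w i * (x i + x' i))) ^ 2
        ∂(Measure.pi fun _ : Fin d => gaussianReal 0 1) =
      Real.exp (2 * (∑ i, (x i + x' i) ^ 2) - (∑ i, x i ^ 2) - (∑ i, x' i ^ 2))) ∧
    (∫ w, (Real.exp (-(∑ i, x i ^ 2) / 2 - (∑ i, x' i ^ 2) / 2) *
            Real.exp (∑ i, w i * (x i + x' i))) ^ 2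
        ∂(Measure.pi fun _ : Fin d => gaussianReal 0 1)) -
      (∫ w, Real.exp (-(∑ i, x i ^ 2) / 2 - (∑ i, x' i ^ 2) / 2) *
            Real.exp (∑ i, w i * (x i + x' i))
        ∂(Measure.pi fun _ : Fin d => gaussianReal 0 1)) ^ 2 =
      Real.exp (2 * (∑ i, (x i + x' i) ^ 2) - (∑ i, x i ^ 2) - (∑ i, x' i ^ 2)) -
        Real.exp (2 * ∑ i, x i * x' i) := by
  set a : ℝ := -(∑ i, x i ^ 2) / 2 - (∑ i, x' i ^ 2) / 2 with ha
  have hsq2 : ∑ i, (2 * (x i + x' i)) ^ 2 / 2 = 2 * ∑ i, (x i + x' i) ^ 2 := by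
    rw [Finset.mul_sum]
    exact Finset.sum_congr rfl fun i _ => by ring
  have hsum : ∑ i, (x i + x' i) ^ 2 = ∑ i, x i ^ 2 + ∑ i, x' i ^ 2 + 2 * ∑ i, x i * x' i := by
    rw [Finset.mul_sum, ← Finset.sum_add_distrib, ← Finset.sum_add_distrib]
    exact Finset.sum_congr rfl fun i _ => by ring
  have h2nd : (∫ w, (Real.exp a * Real.exp (∑ i, w i * (x i + x' i))) ^ 2
        ∂(Measure.pi fun _ : Fin d => gaussianReal 0 1)) =
      Real.exp (2 * (∑ i, (x i + x' i) ^ 2) - (∑ i, x i ^ 2) - (∑ i, x' i ^ 2)) := by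
    have hpt : ∀ w : Fin d → ℝ, (Real.exp a * Real.exp (∑ i, w i * (x i + x' i))) ^ 2
        = Real.exp (2 * a) * Real.exp (∑ i, w i * (2 * (x i + x' i))) := by
      intro w
      rw [mul_pow, sq, ← Real.exp_add, ← two_mul, sq, ← Real.exp_add, ← Finset.sum_add_distrib]
      exact congrArg (fun s => Real.exp (2 * a) * Real.exp s) (Finset.sum_congr rfl fun i _ => by ring)
    simp_rw [hpt]
    rw [key d (2 * a) (fun i => 2 * (x i + x' i)), hsq2]
    congr 1
    rw [ha]
    ring
  have h1st : (∫ w, Real.exp a * Real.exp (∑ i, w i * (x i + x' i))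
        ∂(Measure.pi fun _ : Fin d => gaussianReal 0 1)) ^ 2 =
      Real.exp (2 * ∑ i, x i * x' i) := by
    rw [key d a (fun i => x i + x' i), sq, ← Real.exp_add]
    congr 1
    have : ∑ i, (x i + x' i) ^ 2 / 2 = (∑ i, (x i + x' i) ^ 2) / 2 := by
      rw [Finset.sum_div]
    rw [this, hsum, ha]
    ring
  exact ⟨h2nd, by rw [h2nd, h1st]⟩
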